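/- Let V be a three-dimensional complex vector space equipped with a hermitian inner product H, and let W be a real four-dimensional real subspace of V (viewed as a 6-dimensional real vector space). Then there exists a complex line L ⊆ V such that for all v ∈ L and w ∈ W, |H(v,w)| ≤ cos(π/4)·‖v‖·‖w‖. -/

import Mathlib

open Module


/-- In a 3-dimensional complex hermitian inner product space `V`,
for every real 4-dimensional real subspace `W` there exists a complex line `L`
such that `|⟪v,w⟫| ≤ cos(π/4)·‖v‖·‖w‖` for all `v ∈ L`, `w ∈ W`. -/
theorem stmt_0 (V : Type*) [NormedAddCommGroup V] [InnerProductSpace ℂ V]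
    (hV : Module.finrank ℂ V = 3)
    (W : Submodule ℝ V) (hW : Module.finrank ℝ W = 4) :
    ∃ L : Submodule ℂ V, Module.finrank ℂ L = 1 ∧
      ∀ v ∈ L, ∀ w ∈ W,
        ‖(inner ℂ v w : ℂ)‖ ≤ Real.cos (Real.pi / 4) * ‖v‖ * ‖w‖ := by
  letI : InnerProductSpace ℝ V := InnerProductSpace.complexToReal
  haveI : FiniteDimensional ℂ V := Module.finite_of_finrank_eq_succ (n := 2) hV
  haveI : FiniteDimensional ℝ V := Module.Finite.trans ℂ V
  have hre : ∀ x y : V, (inner ℝ x y : ℝ) = (inner ℂ x y : ℂ).re := fun x y =>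
    real_inner_eq_re_inner ℂ x y
  have hdimR : finrank ℝ V = 6 := by
    have h := Module.finrank_mul_finrank ℝ ℂ V
    rw [Complex.finrank_real_complex, hV] at h
    omega
  have hperp : finrank ℝ Wᗮ = 2 := by
    have := W.finrank_add_finrank_orthogonal
    omega
  -- orthonormal basis of Wᗮ
  let b : OrthonormalBasis (Fin 2) ℝ Wᗮ :=
    (stdOrthonormalBasis ℝ Wᗮ).reindex (finCongr hperp)
  set u₁ : V := (b 0 : V) with hu₁
  set u₂ : V := (b 1 : V) with hu₂
  have hb := b.orthonormal
  have hn1 : ‖u₁‖ = 1 := hb.1 0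
  have hn2 : ‖u₂‖ = 1 := hb.1 1
  have h12 : (inner ℝ u₁ u₂ : ℝ) = 0 := by
    have := hb.2 (i := 0) (j := 1) (by decide)
    beta_reduce at this; rw [Submodule.coe_inner] at this; exact this
  have hmem : ∀ j : Fin 2, ((b j : V)) ∈ Wᗮ := fun j => (b j).2
  -- purely imaginary inner products with W
  have hpure : ∀ j : Fin 2, ∀ w ∈ W, (inner ℂ ((b j : V)) w : ℂ).re = 0 := by
    intro j w hw
    rw [← hre]
    exact real_inner_comm ((b j : V)) w ▸ (Submodule.mem_orthogonal W ((b j : V))).mp (hmem j) w hw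
  have hre12 : (inner ℂ u₁ u₂ : ℂ).re = 0 := by rw [← hre]; exact h12
  set β : ℝ := (inner ℂ u₁ u₂ : ℂ).im with hβ
  set c : ℂ := if 0 ≤ β then -Complex.I else Complex.I with hc
  set v : V := u₁ + c • u₂ with hv
  have hcc : (starRingEnd ℂ) c * c = 1 := by
    rw [hc]; split <;> simp [Complex.ext_iff]
  have hself1 : (inner ℂ u₁ u₁ : ℂ) = 1 := by
    rw [inner_self_eq_norm_sq_to_K, hn1]; norm_num
  have hself2 : (inner ℂ u₂ u₂ : ℂ) = 1 := by
    rw [inner_self_eq_norm_sq_to_K, hn2]; norm_num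
  have hvexp : (inner ℂ v v : ℂ) = 1 + c * (inner ℂ u₁ u₂ : ℂ)
      + (starRingEnd ℂ) c * (starRingEnd ℂ) (inner ℂ u₁ u₂ : ℂ) + 1 := by
    rw [hv]
    rw [inner_add_add_self]
    rw [inner_smul_right, inner_smul_left, inner_smul_left, inner_smul_right,
      ← mul_assoc, hcc, hself1, hself2, ← inner_conj_symm u₁ u₂]
    simp [Complex.conj_conj]
  have hnv : 2 ≤ ‖v‖ ^ 2 := by
    have h1 : ((‖v‖ : ℝ) ^ 2 : ℝ) = (inner ℂ v v : ℂ).re := by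
      rw [← hre]; exact (real_inner_self_eq_norm_sq v).symm
    rw [h1, hvexp]
    rw [hc]
    set x : ℂ := (inner ℂ u₁ u₂ : ℂ)
    split
    · simp only [map_neg, Complex.conj_I]
      simp [Complex.add_re, Complex.mul_re, Complex.I_re, Complex.I_im, hre12,
        Complex.conj_re, Complex.conj_im]
      linarith [‹0 ≤ β›]
    · simp only [Complex.conj_I]
      simp [Complex.add_re, Complex.mul_re, Complex.I_re, Complex.I_im, hre12,
        Complex.conj_re, Complex.conj_im]
      linarith [le_of_not_ge ‹¬0 ≤ β›]
  -- the two vectors I•u₁, I•u₂ are real-orthonormal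
  have hIinner : ∀ x y : V, (inner ℂ ((Complex.I : ℂ) • x) ((Complex.I : ℂ) • y) : ℂ)
      = (inner ℂ x y : ℂ) := by
    intro x y
    rw [inner_smul_left, inner_smul_right, ← mul_assoc, Complex.conj_I]
    simp
  have hIort : Orthonormal ℝ ![(Complex.I : ℂ) • u₁, (Complex.I : ℂ) • u₂] := by
    rw [orthonormal_iff_ite]
    intro i j
    have hre21 : (inner ℂ u₂ u₁ : ℂ).re = 0 := by
      have h := (inner_conj_symm (𝕜 := ℂ) u₂ u₁).symm
      rw [h, Complex.conj_re, hre12]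
    fin_cases i <;> fin_cases j <;>
      simp [hre, hIinner, hself1, hself2, hre12, hre21, Fin.ext_iff, norm_smul, Complex.norm_I, hn1, hn2]
  have him : ∀ (j : Fin 2) (w : V),
      (inner ℝ ((Complex.I : ℂ) • ((b j : V))) w : ℝ) = (inner ℂ ((b j : V)) w : ℂ).im := by
    intro j w
    rw [hre, inner_smul_left, Complex.conj_I]
    simp
  have hbes : ∀ w : V, (inner ℂ u₁ w : ℂ).im ^ 2 + (inner ℂ u₂ w : ℂ).im ^ 2 ≤ ‖w‖ ^ 2 := by
    intro w
    have h := hIort.sum_inner_products_le (s := Finset.univ) w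
    rw [Fin.sum_univ_two] at h
    simpa [show inner ℝ ((Complex.I : ℂ) • u₁) w = (inner ℂ u₁ w).im from him 0 w,
      show inner ℝ ((Complex.I : ℂ) • u₂) w = (inner ℂ u₂ w).im from him 1 w, Real.norm_eq_abs, sq_abs] using h
  have hbound : ∀ w ∈ W, ‖(inner ℂ v w : ℂ)‖ ^ 2 ≤ ‖w‖ ^ 2 := by
    intro w hw
    have h1 : (inner ℂ u₁ w : ℂ).re = 0 := hpure 0 w hw
    have h2 : (inner ℂ u₂ w : ℂ).re = 0 := hpure 1 w hw
    have hvw : (inner ℂ v w : ℂ) = (inner ℂ u₁ w : ℂ) + (starRingEnd ℂ) c * (inner ℂ u₂ w : ℂ) := by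
      rw [hv, inner_add_left, inner_smul_left]
    have hsq : ‖(inner ℂ v w : ℂ)‖ ^ 2 = (inner ℂ u₁ w : ℂ).im ^ 2 + (inner ℂ u₂ w : ℂ).im ^ 2 := by
      rw [hvw, Complex.sq_norm, Complex.normSq_apply, hc]
      split <;>
        simp [Complex.add_re, Complex.add_im, Complex.mul_re, Complex.mul_im, h1, h2] <;> ring
    rw [hsq]
    exact hbes w
  -- assemble
  have hv0 : v ≠ 0 := by
    intro h
    rw [h] at hnv
    simp at hnv
    linarith
  refine ⟨ℂ ∙ v, finrank_span_singleton hv0, ?_⟩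
  intro x hx w hw
  obtain ⟨z, rfl⟩ := Submodule.mem_span_singleton.mp hx
  have h1 : ‖(inner ℂ (z • v) w : ℂ)‖ = ‖z‖ * ‖(inner ℂ v w : ℂ)‖ := by
    rw [inner_smul_left, norm_mul, RCLike.norm_conj]
  have h2 : ‖(inner ℂ v w : ℂ)‖ ≤ ‖w‖ := by
    nlinarith [hbound w hw, norm_nonneg ((inner ℂ v w : ℂ)), norm_nonneg w]
  have h3 : Real.sqrt 2 ≤ ‖v‖ := by
    nlinarith [Real.sq_sqrt (by norm_num : (0:ℝ) ≤ 2), Real.sqrt_nonneg 2, norm_nonneg v]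
  rw [Real.cos_pi_div_four, h1, norm_smul]
  have hz := norm_nonneg z
  have hwn := norm_nonneg w
  have hvn := norm_nonneg v
  have hs2 : Real.sqrt 2 * Real.sqrt 2 = 2 := Real.mul_self_sqrt (by norm_num)
  have key : ‖z‖ * ‖(inner ℂ v w : ℂ)‖ ≤ ‖z‖ * ‖w‖ :=
    mul_le_mul_of_nonneg_left h2 hz
  have key2 : (1:ℝ) ≤ Real.sqrt 2 / 2 * ‖v‖ := by
    nlinarith [Real.sqrt_nonneg 2]
  calc ‖z‖ * ‖(inner ℂ v w : ℂ)‖ ≤ ‖z‖ * ‖w‖ := key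
    _ ≤ (Real.sqrt 2 / 2 * ‖v‖) * (‖z‖ * ‖w‖) := by
        nlinarith [mul_nonneg hz hwn]
    _ = Real.sqrt 2 / 2 * (‖z‖ * ‖v‖) * ‖w‖ := by ring
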